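/- For all integers r ≥ 4 and n ≥ r+5, every n-vertex connected BP_4-free r-uniform hypergraph H satisfies e(H) ≤ max{(n−5)/(r−1) + 3, (n−4)/(r−2) + 2}, where e(H) is the number of hyperedges of H and the two terms are rational numbers. -/

import Mathlib

namespace Berge

def IsBergePath {n : ℕ} (E : Finset (Finset (Fin n))) (k : ℕ)
    (v : Fin (k + 1) → Fin n) (f : Fin k → Finset (Fin n)) : Prop :=
  Function.Injective v ∧ Function.Injective f ∧ (∀ i, f i ∈ E) ∧
    ∀ i : Fin k, v i.castSucc ∈ f i ∧ v i.succ ∈ f i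

def HasBergePath {n : ℕ} (E : Finset (Finset (Fin n))) (k : ℕ) : Prop :=
  ∃ v f, IsBergePath E k v f

def BPFree {n : ℕ} (E : Finset (Finset (Fin n))) (k : ℕ) : Prop :=
  ¬ HasBergePath E k

def Connected {n : ℕ} (E : Finset (Finset (Fin n))) : Prop :=
  ∀ x y : Fin n, ∃ (k : ℕ) (v : Fin (k + 1) → Fin n) (f : Fin k → Finset (Fin n)),
    IsBergePath E k v f ∧ (∃ i, v i = x) ∧ (∃ i, v i = y)

def Uniform {n : ℕ} (E : Finset (Finset (Fin n))) (r : ℕ) : Prop :=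
  ∀ e ∈ E, e.card = r

noncomputable def exConn (n r k : ℕ) : ℕ :=
  sSup {m | ∃ E : Finset (Finset (Fin n)),
    Uniform E r ∧ Connected E ∧ BPFree E k ∧ E.card = m}

def IsBergeCycle {n : ℕ} (E : Finset (Finset (Fin n))) (k : ℕ)
    (v : Fin k → Fin n) (f : Fin k → Finset (Fin n)) : Prop :=
  Function.Injective v ∧ Function.Injective f ∧ (∀ i, f i ∈ E) ∧
    ∀ i : Fin k, v i ∈ f i ∧ v ⟨(i.val + 1) % k, Nat.mod_lt _ i.pos⟩ ∈ f i


def NoRC {n : ℕ} (E : Finset (Finset (Fin n))) : Prop :=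
  ∀ e1 e2 e3 e4 : Finset (Fin n), e1 ∈ E → e2 ∈ E → e3 ∈ E → e4 ∈ E →
    e1 ≠ e2 → e1 ≠ e3 → e1 ≠ e4 → e2 ≠ e3 → e2 ≠ e4 → e3 ≠ e4 →
    ∀ x y z : Fin n, x ∈ e1 → x ∈ e2 → y ∈ e2 → y ∈ e3 → z ∈ e3 → z ∈ e4 →
      x ≠ y → x ≠ z → y ≠ z → False

def Adj {n : ℕ} (E : Finset (Finset (Fin n))) (e f : Finset (Fin n)) : Prop :=
  e ∈ E ∧ f ∈ E ∧ (e ∩ f).Nonempty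

theorem noRC_of_BPFree {n r : ℕ} (E : Finset (Finset (Fin n))) (hr : 4 ≤ r)
    (hu : Uniform E r) (hf : BPFree E 4) : NoRC E := by
  intro e1 e2 e3 e4 he1 he2 he3 he4 h12 h13 h14 h23 h24 h34
    x y z hx1 hx2 hy2 hy3 hz3 hz4 hxy hxz hyz
  -- choose endpoints v1 ∈ e1, v5 ∈ e4 making all five vertices distinct
  have hcard1 : e1.card = r := hu e1 he1
  have hcard4 : e4.card = r := hu e4 he4
  have hv15 : ∃ v1 v5 : Fin n, v1 ∈ e1 ∧ v5 ∈ e4 ∧ v1 ≠ v5 ∧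
      v1 ∉ ({x, y, z} : Finset (Fin n)) ∧ v5 ∉ ({x, y, z} : Finset (Fin n)) := by
    by_cases hcase : (e1 \ (({x, y, z} : Finset (Fin n)) ∪ e4)).Nonempty
    · obtain ⟨v1, hv1⟩ := hcase
      rw [Finset.mem_sdiff, Finset.mem_union] at hv1
      push_neg at hv1
      have h5 : (e4 \ ({x, y, z} : Finset (Fin n))).Nonempty := by
        apply Finset.card_pos.mp
        have := Finset.le_card_sdiff ({x, y, z} : Finset (Fin n)) e4
        have h3 : ({x, y, z} : Finset (Fin n)).card ≤ 3 := by
          apply le_trans (Finset.card_insert_le _ _)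
          simp [Finset.card_insert_le]
          have := Finset.card_insert_le y ({z} : Finset (Fin n))
          simp at this
          omega
        omega
      obtain ⟨v5, hv5⟩ := h5
      rw [Finset.mem_sdiff] at hv5
      exact ⟨v1, v5, hv1.1, hv5.1, fun h => hv1.2.2 (h ▸ hv5.1), hv1.2.1, hv5.2⟩
    · -- e1 \ {x,y,z} ⊆ e4
      rw [Finset.not_nonempty_iff_eq_empty, Finset.sdiff_eq_empty_iff_subset] at hcase
      have h1 : (e1 \ ({x, y, z} : Finset (Fin n))).Nonempty := by
        apply Finset.card_pos.mp
        have := Finset.le_card_sdiff ({x, y, z} : Finset (Fin n)) e1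
        have h3 : ({x, y, z} : Finset (Fin n)).card ≤ 3 := by
          apply le_trans (Finset.card_insert_le _ _)
          have := Finset.card_insert_le y ({z} : Finset (Fin n))
          simp at this ⊢
          omega
        omega
      obtain ⟨v1, hv1⟩ := h1
      rw [Finset.mem_sdiff] at hv1
      have hv1e4 : v1 ∈ e4 := by
        have := hcase hv1.1
        rw [Finset.mem_union] at this
        rcases this with h | h
        · exact absurd h hv1.2
        · exact h
      have h5 : (e4 \ (insert v1 ({x, y, z} : Finset (Fin n)))).Nonempty := by
        rcases Finset.eq_empty_or_nonempty (e4 \ insert v1 ({x, y, z} : Finset (Fin n))) with he | he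
        · exfalso
          rw [Finset.sdiff_eq_empty_iff_subset] at he
          have hc4 : e4.card ≤ (insert v1 ({x, y, z} : Finset (Fin n))).card :=
            Finset.card_le_card he
          have h4 : (insert v1 ({x, y, z} : Finset (Fin n))).card ≤ 4 := by
            apply le_trans (Finset.card_insert_le _ _)
            have h3 : ({x, y, z} : Finset (Fin n)).card ≤ 3 := by
              apply le_trans (Finset.card_insert_le _ _)
              have := Finset.card_insert_le y ({z} : Finset (Fin n))
              simp at this ⊢
              omega
            omega
          have hr4 : r = 4 := by omega
          have he4eq : e4 = insert v1 ({x, y, z} : Finset (Fin n)) := by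
            apply Finset.eq_of_subset_of_card_le he
            rw [hcard4, hr4] at *
            omega
          -- then e1 ⊆ {x,y,z} ∪ e4 = e4, so e1 = e4, contradiction
          have hsub : e1 ⊆ e4 := by
            intro a ha
            by_cases haxyz : a ∈ ({x, y, z} : Finset (Fin n))
            · rw [he4eq]
              exact Finset.mem_insert_of_mem haxyz
            · have := hcase ha
              rw [Finset.mem_union] at this
              rcases this with h | h
              · exact absurd h haxyz
              · exact h
          exact h14 (Finset.eq_of_subset_of_card_le hsub (by omega))
        · exact he
      obtain ⟨v5, hv5⟩ := h5
      rw [Finset.mem_sdiff, Finset.mem_insert] at hv5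
      push_neg at hv5
      exact ⟨v1, v5, hv1.1, hv5.1, fun h => hv5.2.1 h.symm, hv1.2, hv5.2.2⟩
  obtain ⟨v1, v5, hv1e, hv5e, hv15, hv1no, hv5no⟩ := hv15
  rw [Finset.mem_insert, Finset.mem_insert, Finset.mem_singleton] at hv1no hv5no
  push_neg at hv1no hv5no
  apply hf
  refine ⟨![v1, x, y, z, v5], ![e1, e2, e3, e4], ?_, ?_, ?_, ?_⟩
  · intro i j hij
    fin_cases i <;> fin_cases j <;> simp_all <;> tauto
  · intro i j hij
    fin_cases i <;> fin_cases j <;> simp_all <;> tauto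
  · intro i; fin_cases i <;> simpa
  · intro i
    fin_cases i <;> exact ⟨by simpa, by simpa⟩


theorem adj_symm {n : ℕ} (E : Finset (Finset (Fin n))) : Symmetric (Adj E) := by
  intro e f ⟨he, hf, ⟨u, hu⟩⟩
  exact ⟨hf, he, ⟨u, by rw [Finset.inter_comm]; exact hu⟩⟩


theorem chain_conn {n r : ℕ} (E : Finset (Finset (Fin n))) (hr : 4 ≤ r)
    (hu : Uniform E r) (hc : Connected E) :
    ∀ e ∈ E, ∀ f ∈ E, Relation.ReflTransGen (Adj E) e f := by
  intro e he f hf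
  have hene : e.Nonempty := Finset.card_pos.mp (by rw [hu e he]; omega)
  have hfne : f.Nonempty := Finset.card_pos.mp (by rw [hu f hf]; omega)
  obtain ⟨x, hx⟩ := hene
  obtain ⟨y, hy⟩ := hfne
  by_cases hxy : x = y
  · exact Relation.ReflTransGen.single ⟨he, hf, ⟨x, Finset.mem_inter.mpr ⟨hx, hxy ▸ hy⟩⟩⟩
  obtain ⟨k, v, fe, ⟨hvinj, hfinj, hfE, hcons⟩, ⟨i, hi⟩, ⟨j, hj⟩⟩ := hc x y
  have hk : 1 ≤ k := by
    by_contra hk0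
    push_neg at hk0
    interval_cases k
    · refine hxy ?_
      rw [← hi, ← hj]
      congr 1
      omega
  -- each path vertex is in some path edge
  have hidx : ∀ a : Fin (k + 1), ∃ t : Fin k, v a ∈ fe t := by
    intro a
    by_cases ha : a.val < k
    · refine ⟨⟨a.val, ha⟩, ?_⟩
      have := (hcons ⟨a.val, ha⟩).1
      have heq : (⟨a.val, ha⟩ : Fin k).castSucc = a := by
        ext; simp
      rwa [heq] at this
    · have hak : a.val = k := by omega
      refine ⟨⟨k - 1, by omega⟩, ?_⟩
      have := (hcons ⟨k - 1, by omega⟩).2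
      have heq : (⟨k - 1, by omega⟩ : Fin k).succ = a := by
        ext; simp; omega
      rwa [heq] at this
  -- consecutive edges of the path are adjacent
  have hcons2 : ∀ q : ℕ, ∀ hq : q + 1 < k,
      Adj E (fe ⟨q, by omega⟩) (fe ⟨q + 1, hq⟩) := by
    intro q hq
    refine ⟨hfE _, hfE _, ⟨v ⟨q + 1, by omega⟩, Finset.mem_inter.mpr ⟨?_, ?_⟩⟩⟩
    · have := (hcons ⟨q, by omega⟩).2
      have heq : (⟨q, by omega⟩ : Fin k).succ = (⟨q + 1, by omega⟩ : Fin (k+1)) := by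
        ext; simp
      rwa [heq] at this
    · have := (hcons ⟨q + 1, hq⟩).1
      have heq : (⟨q + 1, hq⟩ : Fin k).castSucc = (⟨q + 1, by omega⟩ : Fin (k+1)) := by
        ext; simp
      rwa [heq] at this
  have hchain : ∀ p q : ℕ, ∀ hp : p < k, ∀ hq : q < k, p ≤ q →
      Relation.ReflTransGen (Adj E) (fe ⟨p, hp⟩) (fe ⟨q, hq⟩) := by
    intro p q hp hq hpq
    induction q with
    | zero =>
      have : p = 0 := by omega
      subst this
      exact Relation.ReflTransGen.refl
    | succ q ih =>
      by_cases hpq' : p = q + 1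
      · subst hpq'; exact Relation.ReflTransGen.refl
      · have hq' : q < k := by omega
        exact Relation.ReflTransGen.tail (ih hq' (by omega)) (hcons2 q hq)
  have hchain2 : ∀ s t : Fin k, Relation.ReflTransGen (Adj E) (fe s) (fe t) := by
    intro s t
    rcases le_or_gt s.val t.val with h | h
    · have := hchain s.val t.val s.isLt t.isLt h
      simpa using this
    · have := hchain t.val s.val t.isLt s.isLt (le_of_lt h)
      have hsym : ∀ ⦃a b⦄, Relation.ReflTransGen (Adj E) a b → Relation.ReflTransGen (Adj E) b a :=
        fun a b h => (@Relation.ReflTransGen.stdSymm _ _ ⟨fun a b h => adj_symm E h⟩).symm a b h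
      have := hsym this
      simpa using this
  obtain ⟨ti, hti⟩ := hidx i
  obtain ⟨tj, htj⟩ := hidx j
  have h1 : Relation.ReflTransGen (Adj E) e (fe ti) :=
    Relation.ReflTransGen.single ⟨he, hfE ti, ⟨x, Finset.mem_inter.mpr ⟨hx, hi ▸ hti⟩⟩⟩
  have h2 : Relation.ReflTransGen (Adj E) (fe tj) f :=
    Relation.ReflTransGen.single ⟨hfE tj, hf, ⟨y, Finset.mem_inter.mpr ⟨hj ▸ htj, hy⟩⟩⟩
  exact (h1.trans (hchain2 ti tj)).trans h2


theorem extract_adj {n : ℕ} (E : Finset (Finset (Fin n))) {e f : Finset (Fin n)}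
    (h : Relation.ReflTransGen (Adj E) e f) (hne : e ≠ f) :
    ∃ a b, a ∈ E ∧ b ∈ E ∧ a ≠ b ∧ (a ∩ b).Nonempty := by
  induction h with
  | refl => exact absurd rfl hne
  | @tail b c hst hrel ih =>
    by_cases hbceq : b = c
    · subst hbceq; exact ih hne
    · exact ⟨b, c, hrel.1, hrel.2.1, hbceq, hrel.2.2⟩


theorem first_hit {n : ℕ} (E : Finset (Finset (Fin n))) {a b : Finset (Fin n)}
    (hab : a ≠ b) :
    ∀ c, Relation.ReflTransGen (Adj E) c a → c ≠ a → c ≠ b →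
    ∃ p q, p ∈ E ∧ q ∈ E ∧ p ≠ a ∧ p ≠ b ∧ (q = a ∨ q = b) ∧ (p ∩ q).Nonempty := by
  intro c hchain
  induction hchain using Relation.ReflTransGen.head_induction_on with
  | refl => intro h1 _; exact absurd rfl h1
  | @head c' d hrd hda ih =>
    intro hc'a hc'b
    by_cases hda' : d = a
    · exact ⟨c', a, hrd.1, hda' ▸ hrd.2.1, hc'a, hc'b, Or.inl rfl, hda' ▸ hrd.2.2⟩
    by_cases hdb : d = b
    · exact ⟨c', b, hrd.1, hdb ▸ hrd.2.1, hc'a, hc'b, Or.inr rfl, hdb ▸ hrd.2.2⟩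
    exact ih hda' hdb


theorem sunflower {n : ℕ} (E : Finset (Finset (Fin n)))
    (hconn : ∀ e ∈ E, ∀ f ∈ E, Relation.ReflTransGen (Adj E) e f)
    (hm : 3 ≤ E.card)
    (hA : ∀ e ∈ E, ∀ f ∈ E, ∀ g ∈ E, e ≠ f → f ≠ g → e ≠ g →
      ∀ x ∈ e ∩ f, ∀ y ∈ f ∩ g, x = y) :
    ∃ t : Fin n, ∀ e ∈ E, ∀ f ∈ E, e ≠ f → e ∩ f = {t} := by
  classical
  -- two distinct edges
  obtain ⟨e', he', f', hf', hef'⟩ : ∃ e' ∈ E, ∃ f' ∈ E, e' ≠ f' := by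
    have h2 : 1 < E.card := by omega
    obtain ⟨u, hu, w, hw, huw⟩ := Finset.one_lt_card.mp h2
    exact ⟨u, hu, w, hw, huw⟩
  obtain ⟨a, b, ha, hb, hab, habne⟩ := extract_adj E (hconn e' he' f' hf') hef'
  -- third edge
  obtain ⟨h3, hh3⟩ : ∃ h3, h3 ∈ E ∧ h3 ≠ a ∧ h3 ≠ b := by
    have : (E \ {a, b}).Nonempty := by
      apply Finset.card_pos.mp
      have hle : (E ∩ {a, b}).card ≤ 2 := by
        apply le_trans (Finset.card_le_card (Finset.inter_subset_right))
        apply le_trans (Finset.card_insert_le _ _)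
        simp
      have := Finset.card_sdiff_add_card_inter E ({a, b} : Finset (Finset (Fin n)))
      omega
    obtain ⟨h3, hh3⟩ := this
    rw [Finset.mem_sdiff, Finset.mem_insert, Finset.mem_singleton] at hh3
    push_neg at hh3
    exact ⟨h3, hh3.1, hh3.2.1, hh3.2.2⟩
  obtain ⟨hh3E, hh3a, hh3b⟩ := hh3
  obtain ⟨p, q, hp, hq, hpa, hpb, hqab, hpq⟩ :=
    first_hit E hab h3 (hconn h3 hh3E a ha) hh3a hh3b
  -- triple (p, q, other)
  obtain ⟨g0, hg0, hqg0, hqg0ne, hpg0ne⟩ : ∃ g0, g0 ∈ E ∧ (q ∩ g0).Nonempty ∧ q ≠ g0 ∧ p ≠ g0 := by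
    rcases hqab with rfl | rfl
    · exact ⟨b, hb, habne, hab, hpb⟩
    · refine ⟨a, ha, ?_, fun h => hab h.symm, hpa⟩
      obtain ⟨u, hu⟩ := habne
      exact ⟨u, by rw [Finset.inter_comm]; exact hu⟩
  have hpqne : p ≠ q := by rcases hqab with rfl | rfl <;> assumption
  have hqE : q ∈ E := hq
  obtain ⟨x, hx⟩ := hpq
  obtain ⟨y, hy⟩ := hqg0
  -- the core t
  set t := x with ht
  have hxy : x = y := hA p hp q hqE g0 hg0 hpqne hqg0ne hpg0ne x hx y hy
  have htp : t ∈ p := (Finset.mem_inter.mp hx).1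
  have htq : t ∈ q := (Finset.mem_inter.mp hx).2
  -- spreading
  have hspread : ∀ k ∈ E, t ∈ k ∧ ∃ l, l ∈ E ∧ l ≠ k ∧ t ∈ l := by
    intro k hk
    have hchain := hconn q hqE k hk
    clear hy hxy
    induction hchain with
    | refl => exact ⟨htq, ⟨p, hp, hpqne, htp⟩⟩
    | @tail j k' hst hrel ih =>
      have hjE : j ∈ E := hrel.1
      have hk'E : k' ∈ E := hrel.2.1
      obtain ⟨htj, l, hlE, hlj, htl⟩ := ih hjE
      by_cases hkj : k' = j
      · subst hkj; exact ⟨htj, l, hlE, hlj, htl⟩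
      by_cases hlk : l = k'
      · subst hlk; exact ⟨htl, j, hjE, fun h => hkj h.symm, htj⟩
      · obtain ⟨u, hu⟩ := hrel.2.2
        have : t = u := hA l hlE j hjE k' hk'E hlj (fun h => hkj h.symm) hlk t
          (Finset.mem_inter.mpr ⟨htl, htj⟩) u hu
        exact ⟨this ▸ (Finset.mem_inter.mp hu).2, j, hjE, fun h => hkj h.symm, htj⟩
  refine ⟨t, ?_⟩
  intro e he f hf hef
  have hte := (hspread e he).1
  have htf := (hspread f hf).1
  -- third edge distinct from e, f
  obtain ⟨g, hgE, hge, hgf⟩ : ∃ g, g ∈ E ∧ g ≠ e ∧ g ≠ f := by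
    have : (E \ {e, f}).Nonempty := by
      apply Finset.card_pos.mp
      have hle : (E ∩ {e, f}).card ≤ 2 := by
        apply le_trans (Finset.card_le_card (Finset.inter_subset_right))
        apply le_trans (Finset.card_insert_le _ _)
        simp
      have := Finset.card_sdiff_add_card_inter E ({e, f} : Finset (Finset (Fin n)))
      omega
    obtain ⟨g, hg⟩ := this
    rw [Finset.mem_sdiff, Finset.mem_insert, Finset.mem_singleton] at hg
    push_neg at hg
    exact ⟨g, hg.1, hg.2.1, hg.2.2⟩
  have htg := (hspread g hgE).1
  ext u
  simp only [Finset.mem_inter, Finset.mem_singleton]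
  constructor
  · rintro ⟨hue, huf⟩
    exact (hA g hgE e he f hf hge hef hgf t (Finset.mem_inter.mpr ⟨htg, hte⟩) u
      (Finset.mem_inter.mpr ⟨hue, huf⟩)).symm
  · rintro rfl
    exact ⟨hte, htf⟩


theorem trace_count {n r : ℕ} (E : Finset (Finset (Fin n))) (hr : 4 ≤ r)
    (hu : Uniform E r) (hRC : NoRC E) (d : Finset (Fin n)) (hd : d ∈ E)
    (hpair : ∀ e ∈ E.erase d, ∀ f ∈ E.erase d, e ≠ f → e ∩ f ⊆ d) :
    E.card * r + 8 ≤ (E.biUnion id).card + 2 * E.card + 2 * r := by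
  classical
  set Ed := E.erase d with hEd
  have hEdsub : ∀ e ∈ Ed, e ∈ E := fun e he => Finset.mem_of_mem_erase he
  have hEdne : ∀ e ∈ Ed, e ≠ d := fun e he => Finset.ne_of_mem_erase he
  have hm1 : Ed.card = E.card - 1 := Finset.card_erase_of_mem hd
  have hm1' : 1 ≤ E.card := Finset.card_pos.mpr ⟨d, hd⟩
  -- the big union contains d and the pairwise disjoint sets e \ d
  have hdisj : ∀ e ∈ Ed, ∀ f ∈ Ed, e ≠ f → Disjoint (e \ d) (f \ d) := by
    intro e he f hf hef
    rw [Finset.disjoint_left]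
    intro u hue huf
    rw [Finset.mem_sdiff] at hue huf
    exact hue.2 (hpair e he f hf hef (Finset.mem_inter.mpr ⟨hue.1, huf.1⟩))
  have hsub : d ∪ Ed.biUnion (fun e => e \ d) ⊆ E.biUnion id := by
    intro u hu
    rw [Finset.mem_union] at hu
    rcases hu with hu | hu
    · exact Finset.mem_biUnion.mpr ⟨d, hd, hu⟩
    · obtain ⟨e, he, hue⟩ := Finset.mem_biUnion.mp hu
      exact Finset.mem_biUnion.mpr ⟨e, hEdsub e he, (Finset.mem_sdiff.mp hue).1⟩
  have hdisj2 : Disjoint d (Ed.biUnion (fun e => e \ d)) := by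
    rw [Finset.disjoint_right]
    intro u hu
    obtain ⟨e, he, hue⟩ := Finset.mem_biUnion.mp hu
    exact (Finset.mem_sdiff.mp hue).2
  have hcount1 : d.card + ∑ e ∈ Ed, (e \ d).card ≤ (E.biUnion id).card := by
    calc d.card + ∑ e ∈ Ed, (e \ d).card
        = d.card + (Ed.biUnion (fun e => e \ d)).card := by
          rw [Finset.card_biUnion hdisj]
      _ = (d ∪ Ed.biUnion (fun e => e \ d)).card := by
          rw [Finset.card_union_of_disjoint hdisj2]
      _ ≤ (E.biUnion id).card := Finset.card_le_card hsub
  -- split each edge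
  have hsplit : ∀ e ∈ Ed, (e \ d).card + (e ∩ d).card = r := by
    intro e he
    rw [Finset.card_sdiff_add_card_inter, hu e (hEdsub e he)]
  set S := ∑ e ∈ Ed, (e ∩ d).card with hS
  have hsum : ∑ e ∈ Ed, (e \ d).card + S = Ed.card * r := by
    rw [hS, ← Finset.sum_add_distrib]
    rw [Finset.sum_congr rfl hsplit, Finset.sum_const, smul_eq_mul]
  -- upper bound for each trace
  have htrace_le : ∀ e ∈ Ed, (e ∩ d).card ≤ r - 1 := by
    intro e he
    by_contra hcon
    push_neg at hcon
    have h1 : (e ∩ d).card ≤ e.card := Finset.card_le_card Finset.inter_subset_left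
    rw [hu e (hEdsub e he)] at h1
    have h2 : (e ∩ d).card = r := by omega
    have h3 : e ∩ d = e := Finset.eq_of_subset_of_card_le Finset.inter_subset_left
      (by rw [hu e (hEdsub e he), h2])
    have h4 : e ⊆ d := by
      intro u hue
      have : u ∈ e ∩ d := by rw [h3]; exact hue
      exact (Finset.mem_inter.mp this).2
    exact hEdne e he (Finset.eq_of_subset_of_card_le h4
      (by rw [hu e (hEdsub e he), hu d hd]))
  -- heavy edges
  set H := Ed.filter (fun e => 3 ≤ (e ∩ d).card) with hH
  set L := Ed.filter (fun e => ¬ 3 ≤ (e ∩ d).card) with hL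
  have hHL : H.card + L.card = Ed.card := Finset.card_filter_add_card_filter_not _
  have hLsum : ∑ e ∈ L, (e ∩ d).card ≤ 2 * L.card := by
    rw [mul_comm]
    apply Finset.sum_le_card_nsmul
    intro e he
    have := (Finset.mem_filter.mp he).2
    omega
  have hSsplit : S = ∑ e ∈ H, (e ∩ d).card + ∑ e ∈ L, (e ∩ d).card := by
    rw [hS, hH, hL]
    exact (Finset.sum_filter_add_sum_filter_not _ _ _).symm
  have hHsub : ∀ e ∈ H, e ∈ Ed := fun e he => (Finset.mem_filter.mp he).1
  have hHheavy : ∀ e ∈ H, 3 ≤ (e ∩ d).card := fun e he => (Finset.mem_filter.mp he).2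
  have hkey : S + 8 ≤ 2 * E.card + 2 * r := by
    by_cases hk : H.card ≤ 2
    · -- few heavies
      have hHsum : ∑ e ∈ H, (e ∩ d).card ≤ H.card * (r - 1) := by
        apply Finset.sum_le_card_nsmul
        intro e he
        exact htrace_le e (hHsub e he)
      have h1 : H.card * (r - 1) = H.card * (r - 3) + H.card * 2 := by
        rw [← Nat.mul_add]
        congr 1
        omega
      have h2 : H.card * (r - 3) ≤ 2 * (r - 3) :=
        Nat.mul_le_mul_right _ hk
      omega
    · -- at least 3 heavies
      push_neg at hk
      -- for each heavy h there is a vertex u such that all its heavy intersections are ⊆ {u}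
      have hchoice : ∀ h ∈ H, ∃ u : Fin n, ∀ h' ∈ H, h' ≠ h → h ∩ h' ⊆ {u} := by
        intro h hh
        by_cases hex : ∃ h' ∈ H, h' ≠ h ∧ (h ∩ h').Nonempty
        · obtain ⟨h0, hh0, hh0ne, u0, hu0⟩ := hex
          refine ⟨u0, ?_⟩
          intro h' hh' hne w hw
          rw [Finset.mem_singleton]
          by_contra hwu
          rw [Finset.mem_inter] at hu0 hw
          by_cases hcase : h' = h0
          · -- two points in h ∩ h0, use a third heavy edge
            obtain ⟨h3, hh3⟩ : (H \ {h, h'} : Finset (Finset (Fin n))).Nonempty := by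
              apply Finset.card_pos.mp
              have hle : (H ∩ {h, h'}).card ≤ 2 := by
                apply le_trans (Finset.card_le_card Finset.inter_subset_right)
                apply le_trans (Finset.card_insert_le _ _)
                simp
              have := Finset.card_sdiff_add_card_inter H ({h, h'} : Finset (Finset (Fin n)))
              omega
            rw [Finset.mem_sdiff, Finset.mem_insert, Finset.mem_singleton] at hh3
            push_neg at hh3
            obtain ⟨hh3H, hh3h, hh3h'⟩ := hh3
            obtain ⟨c, hc⟩ : (h3 ∩ d).Nonempty := Finset.card_pos.mp (by
              have := hHheavy h3 hh3H; omega)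
            rw [Finset.mem_inter] at hc
            have hwh0 : w ∈ h0 := by rw [← hcase]; exact hw.2
            obtain ⟨z, hz1, hz2, hzc⟩ : ∃ z, z ∈ h ∧ z ∈ h0 ∧ z ≠ c := by
              by_cases hwc : w = c
              · exact ⟨u0, hu0.1, hu0.2, fun hh => hwu (hwc.trans hh.symm)⟩
              · exact ⟨w, hw.1, hwh0, hwc⟩
            obtain ⟨y, hy⟩ : ((h ∩ d) \ ({c, z} : Finset (Fin n))).Nonempty := by
              apply Finset.card_pos.mp
              have h3c : 3 ≤ (h ∩ d).card := hHheavy h hh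
              have hle : ((h ∩ d) ∩ {c, z}).card ≤ 2 := by
                apply le_trans (Finset.card_le_card Finset.inter_subset_right)
                apply le_trans (Finset.card_insert_le _ _)
                simp
              have := Finset.card_sdiff_add_card_inter (h ∩ d) ({c, z} : Finset (Fin n))
              omega
            rw [Finset.mem_sdiff, Finset.mem_insert, Finset.mem_singleton] at hy
            push_neg at hy
            obtain ⟨hymem, hyc, hyz⟩ := hy
            rw [Finset.mem_inter] at hymem
            -- rainbow chain h3 - d - h - h0
            have hh0H : h0 ∈ H := hh0
            have hh3h0 : h3 ≠ h0 := by rw [← hcase]; exact hh3h'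
            exact hRC h3 d h h0 (hEdsub h3 (hHsub h3 hh3H)) hd
              (hEdsub h (hHsub h hh)) (hEdsub h0 (hHsub h0 hh0H))
              (hEdne h3 (hHsub h3 hh3H)) hh3h hh3h0
              (Ne.symm (hEdne h (hHsub h hh))) (Ne.symm (hEdne h0 (hHsub h0 hh0H)))
              (Ne.symm hh0ne)
              c y z hc.1 hc.2 hymem.2 hymem.1 hz1 hz2
              (Ne.symm hyc) (Ne.symm hzc) hyz
          · -- h' ≠ h0 : chain h0 - h - h' - d
            obtain ⟨c, hcmem, hcu0, hcw⟩ : ∃ c, c ∈ h' ∩ d ∧ c ≠ u0 ∧ c ≠ w := by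
              obtain ⟨c, hc⟩ : ((h' ∩ d) \ {u0, w}).Nonempty := by
                apply Finset.card_pos.mp
                have h3c : 3 ≤ (h' ∩ d).card := hHheavy h' hh'
                have hle : ((h' ∩ d) ∩ {u0, w}).card ≤ 2 := by
                  apply le_trans (Finset.card_le_card Finset.inter_subset_right)
                  apply le_trans (Finset.card_insert_le _ _)
                  simp
                have := Finset.card_sdiff_add_card_inter (h' ∩ d) ({u0, w} : Finset (Fin n))
                omega
              rw [Finset.mem_sdiff, Finset.mem_insert, Finset.mem_singleton] at hc
              push_neg at hc
              exact ⟨c, hc.1, hc.2.1, hc.2.2⟩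
            rw [Finset.mem_inter] at hcmem
            exact hRC h0 h h' d (hEdsub h0 (hHsub h0 hh0)) (hEdsub h (hHsub h hh))
              (hEdsub h' (hHsub h' hh')) hd
              hh0ne (fun hh => hcase hh.symm) (hEdne h0 (hHsub h0 hh0))
              (fun hh => hne hh.symm) (hEdne h (hHsub h hh)) (hEdne h' (hHsub h' hh'))
              u0 w c hu0.2 hu0.1 hw.1 hw.2 hcmem.1 hcmem.2
              (fun hh => hwu hh.symm) hcu0.symm hcw.symm
        · push_neg at hex
          obtain ⟨u, hu⟩ : (h ∩ d).Nonempty := Finset.card_pos.mp (by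
            have := hHheavy h hh; omega)
          refine ⟨u, ?_⟩
          intro h' hh' hne w hw
          exact absurd ⟨w, hw⟩ (Finset.not_nonempty_iff_eq_empty.mpr (hex h' hh' hne))
      have hne0 : Nonempty (Fin n) := by
        obtain ⟨v0, hv0⟩ : d.Nonempty := Finset.card_pos.mp (by rw [hu d hd]; omega)
        exact ⟨v0⟩
      choose! uu huu using hchoice
      have hdisjH : ∀ e ∈ H, ∀ f ∈ H, e ≠ f →
          Disjoint ((e ∩ d).erase (uu e)) ((f ∩ d).erase (uu f)) := by
        intro e he f hf hef
        rw [Finset.disjoint_left]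
        intro x hx hx'
        have hxe := Finset.mem_of_mem_erase hx
        have hxf := Finset.mem_of_mem_erase hx'
        have : x ∈ e ∩ f := Finset.mem_inter.mpr
          ⟨(Finset.mem_inter.mp hxe).1, (Finset.mem_inter.mp hxf).1⟩
        have := huu e he f hf (fun hh => hef hh.symm) this
        rw [Finset.mem_singleton] at this
        exact (Finset.ne_of_mem_erase hx) this
      have hbiU : (H.biUnion (fun e => (e ∩ d).erase (uu e))).card ≤ r := by
        have hsub2 : H.biUnion (fun e => (e ∩ d).erase (uu e)) ⊆ d := by
          intro x hx
          obtain ⟨e, he, hxe⟩ := Finset.mem_biUnion.mp hx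
          exact (Finset.mem_inter.mp (Finset.mem_of_mem_erase hxe)).2
        calc (H.biUnion (fun e => (e ∩ d).erase (uu e))).card ≤ d.card :=
            Finset.card_le_card hsub2
          _ = r := hu d hd
      rw [Finset.card_biUnion hdisjH] at hbiU
      have hHsum2 : ∑ e ∈ H, (e ∩ d).card ≤ r + H.card := by
        have : ∀ e ∈ H, (e ∩ d).card ≤ ((e ∩ d).erase (uu e)).card + 1 := by
          intro e he
          have := Finset.pred_card_le_card_erase (s := e ∩ d) (a := uu e)
          have h1 : 1 ≤ (e ∩ d).card := by have := hHheavy e he; omega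
          omega
        calc ∑ e ∈ H, (e ∩ d).card ≤ ∑ e ∈ H, (((e ∩ d).erase (uu e)).card + 1) :=
            Finset.sum_le_sum this
          _ = ∑ e ∈ H, ((e ∩ d).erase (uu e)).card + H.card := by
            rw [Finset.sum_add_distrib, Finset.sum_const, smul_eq_mul, mul_one]
          _ ≤ r + H.card := by omega
      omega
  -- combine
  have h9 : Ed.card + 1 = E.card := by omega
  have hfinal : E.card * r = Ed.card * r + r := by
    rw [← h9, Nat.add_mul, one_mul]
  rw [hu d hd] at hcount1
  omega


theorem caseB {n r : ℕ} (E : Finset (Finset (Fin n))) (hr : 4 ≤ r)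
    (hu : Uniform E r) (hRC : NoRC E)
    (hconn : ∀ e ∈ E, ∀ f ∈ E, Relation.ReflTransGen (Adj E) e f)
    (hm : 4 ≤ E.card)
    (c1 c2 c3 : Finset (Fin n)) (hc1 : c1 ∈ E) (hc2 : c2 ∈ E) (hc3 : c3 ∈ E)
    (h12 : c1 ≠ c2) (h13 : c1 ≠ c3) (h23 : c2 ≠ c3)
    (x0 y0 : Fin n) (hx01 : x0 ∈ c1) (hx02 : x0 ∈ c2)
    (hy02 : y0 ∈ c2) (hy03 : y0 ∈ c3) (hxy : x0 ≠ y0) :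
    E.card * r + 8 ≤ (E.biUnion id).card + 2 * E.card + 2 * r := by
  classical
  have B1a : ∀ h, h ∈ E → h ≠ c1 → h ≠ c2 → h ≠ c3 →
      ∀ a, a ∈ h → a ∈ c1 → a = x0 ∨ a = y0 := by
    intro h hh hn1 hn2 hn3 a ha hac1
    by_contra hcon
    push_neg at hcon
    exact hRC h c1 c2 c3 hh hc1 hc2 hc3 hn1 hn2 hn3 h12 h13 h23
      a x0 y0 ha hac1 hx01 hx02 hy02 hy03 hcon.1 hcon.2 hxy
  have B1c : ∀ h, h ∈ E → h ≠ c1 → h ≠ c2 → h ≠ c3 →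
      ∀ a, a ∈ h → a ∈ c3 → a = x0 ∨ a = y0 := by
    intro h hh hn1 hn2 hn3 a ha hac3
    by_contra hcon
    push_neg at hcon
    exact hRC h c3 c2 c1 hh hc3 hc2 hc1 hn3 hn2 hn1 h23.symm h13.symm h12.symm
      a y0 x0 ha hac3 hy03 hy02 hx02 hx01 hcon.2 hcon.1 hxy.symm
  -- W1 : a shared vertex outside c2 kills all c2-attachments
  have W1 : ∀ h h', h ∈ E → h ≠ c1 → h ≠ c2 → h ≠ c3 →
      h' ∈ E → h' ≠ c1 → h' ≠ c2 → h' ≠ c3 → h' ≠ h →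
      ∀ w, w ∈ h → w ∈ h' → w ∉ c2 → ∀ b, b ∈ h → b ∈ c2 → False := by
    intro h h' hh hn1 hn2 hn3 hh' hn1' hn2' hn3' hne w hwh hwh' hwc2 b hbh hbc2
    by_cases hbx : b = x0
    · subst hbx
      exact hRC h' h c2 c3 hh' hh hc2 hc3 hne hn2' hn3' hn2 hn3 h23
        w b y0 hwh' hwh hbh hbc2 hy02 hy03
        (fun hh => hwc2 (hh ▸ hbc2)) (fun hh => hwc2 (hh ▸ hy02)) hxy
    · exact hRC h' h c2 c1 hh' hh hc2 hc1 hne hn2' hn1' hn2 hn1 h12.symm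
        w b x0 hwh' hwh hbh hbc2 hx02 hx01
        (fun hh => hwc2 (hh ▸ hbc2)) (fun hh => hwc2 (hh ▸ hx02)) hbx
  -- every outside edge touches the triple
  have attached : ∀ h, h ∈ E → h ≠ c1 → h ≠ c2 → h ≠ c3 →
      ∃ u, u ∈ h ∧ (u ∈ c1 ∨ u ∈ c2 ∨ u ∈ c3) := by
    intro h hh hn1 hn2 hn3
    by_contra hdet
    push_neg at hdet
    have spread : ∀ k, Relation.ReflTransGen (Adj E) h k →
        k ∈ E ∧ k ≠ c1 ∧ k ≠ c2 ∧ k ≠ c3 ∧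
          (∀ u ∈ k, u ∉ c1 ∧ u ∉ c2 ∧ u ∉ c3) := by
      intro k hchain
      induction hchain with
      | refl =>
        refine ⟨hh, hn1, hn2, hn3, ?_⟩
        intro u hu
        have h1 := hdet u hu
        exact h1
      | @tail j k' hst hrel ih =>
        obtain ⟨hjE, hjn1, hjn2, hjn3, hjall⟩ := ih
        obtain ⟨u, hu⟩ := hrel.2.2
        rw [Finset.mem_inter] at hu
        have hkE : k' ∈ E := hrel.2.1
        have huj := hjall u hu.1
        by_cases hkj : k' = j
        · subst hkj; exact ⟨hjE, hjn1, hjn2, hjn3, hjall⟩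
        have hkn1 : k' ≠ c1 := fun hc => huj.1 (hc ▸ hu.2)
        have hkn2 : k' ≠ c2 := fun hc => huj.2.1 (hc ▸ hu.2)
        have hkn3 : k' ≠ c3 := fun hc => huj.2.2 (hc ▸ hu.2)
        refine ⟨hkE, hkn1, hkn2, hkn3, ?_⟩
        intro u' hu'
        have hA2 : ∀ b, b ∈ k' → b ∈ c2 → False :=
          W1 k' j hkE hkn1 hkn2 hkn3 hjE hjn1 hjn2 hjn3 (Ne.symm hkj) u hu.2 hu.1 huj.2.1
        refine ⟨?_, fun hc => hA2 u' hu' hc, ?_⟩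
        · intro hc
          rcases B1a k' hkE hkn1 hkn2 hkn3 u' hu' hc with h' | h'
          · exact hA2 u' hu' (h' ▸ hx02)
          · exact hA2 u' hu' (h' ▸ hy02)
        · intro hc
          rcases B1c k' hkE hkn1 hkn2 hkn3 u' hu' hc with h' | h'
          · exact hA2 u' hu' (h' ▸ hx02)
          · exact hA2 u' hu' (h' ▸ hy02)
    exact (spread c2 (hconn h hh c2 hc2)).2.2.1 rfl
  -- intersections of two outside edges lie in c2
  have EE2 : ∀ h h', h ∈ E → h ≠ c1 → h ≠ c2 → h ≠ c3 →
      h' ∈ E → h' ≠ c1 → h' ≠ c2 → h' ≠ c3 → h' ≠ h →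
      ∀ w, w ∈ h → w ∈ h' → w ∈ c2 := by
    intro h h' hh hn1 hn2 hn3 hh' hn1' hn2' hn3' hne w hwh hwh'
    by_contra hwc2
    have hA2 : ∀ b, b ∈ h → b ∈ c2 → False :=
      W1 h h' hh hn1 hn2 hn3 hh' hn1' hn2' hn3' hne w hwh hwh' hwc2
    obtain ⟨u, hu, hcase⟩ := attached h hh hn1 hn2 hn3
    rcases hcase with hc | hc | hc
    · rcases B1a h hh hn1 hn2 hn3 u hu hc with h' | h'
      · exact hA2 u hu (h' ▸ hx02)
      · exact hA2 u hu (h' ▸ hy02)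
    · exact hA2 u hu hc
    · rcases B1c h hh hn1 hn2 hn3 u hu hc with h' | h'
      · exact hA2 u hu (h' ▸ hx02)
      · exact hA2 u hu (h' ▸ hy02)
  -- c1 ∩ c3 ⊆ c2
  have Zc2 : ∀ z, z ∈ c1 → z ∈ c3 → z ∈ c2 := by
    intro z hz1 hz3
    by_contra hz2
    -- an outside edge exists
    obtain ⟨h, hhE, hn1, hn2, hn3⟩ :
        ∃ h, h ∈ E ∧ h ≠ c1 ∧ h ≠ c2 ∧ h ≠ c3 := by
      obtain ⟨h, hh⟩ : (E \ {c1, c2, c3} : Finset (Finset (Fin n))).Nonempty := by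
        apply Finset.card_pos.mp
        have hle : (E ∩ {c1, c2, c3}).card ≤ 3 := by
          apply le_trans (Finset.card_le_card Finset.inter_subset_right)
          apply le_trans (Finset.card_insert_le _ _)
          have := Finset.card_insert_le c2 ({c3} : Finset (Finset (Fin n)))
          simp at this ⊢
          omega
        have := Finset.card_sdiff_add_card_inter E ({c1, c2, c3} : Finset (Finset (Fin n)))
        omega
      rw [Finset.mem_sdiff, Finset.mem_insert, Finset.mem_insert, Finset.mem_singleton] at hh
      push_neg at hh
      exact ⟨h, hh.1, hh.2.1, hh.2.2.1, hh.2.2.2⟩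
    have A2CASE : ∀ b, b ∈ h → b ∈ c2 → False := by
      intro b hbh hbc2
      by_cases hbx : b = x0
      · subst hbx
        exact hRC c1 c3 c2 h hc1 hc3 hc2 hhE h13 h12 (Ne.symm hn1) h23.symm
          (Ne.symm hn3) (Ne.symm hn2)
          z y0 b hz1 hz3 hy03 hy02 hbc2 hbh
          (fun hh => hz2 (hh ▸ hy02)) (fun hh => hz2 (hh ▸ hbc2)) hxy.symm
      · exact hRC h c2 c1 c3 hhE hc2 hc1 hc3 hn2 hn1 hn3 h12.symm h23 h13
          b x0 z hbh hbc2 hx02 hx01 hz1 hz3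
          hbx (fun hh => hz2 (hh ▸ hbc2)) (fun hh => hz2 (hh ▸ hx02))
    obtain ⟨u, hu, hcase⟩ := attached h hhE hn1 hn2 hn3
    rcases hcase with hc | hc | hc
    · rcases B1a h hhE hn1 hn2 hn3 u hu hc with h' | h'
      · -- u = x0 ∈ h ∩ c1 : chain h - c1 - c3 - c2
        refine hRC h c1 c3 c2 hhE hc1 hc3 hc2 hn1 hn3 hn2 h13 h12 h23.symm
          x0 z y0 (by rw [← h']; exact hu) hx01 hz1 hz3 hy03 hy02
          (fun hh => hz2 (hh ▸ hx02)) hxy (fun hh => hz2 (hh ▸ hy02))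
      · exact A2CASE u hu (h' ▸ hy02)
    · exact A2CASE u hu hc
    · rcases B1c h hhE hn1 hn2 hn3 u hu hc with h' | h'
      · exact A2CASE u hu (h' ▸ hx02)
      · -- u = y0 ∈ h ∩ c3 : chain h - c3 - c1 - c2
        refine hRC h c3 c1 c2 hhE hc3 hc1 hc2 hn3 hn1 hn2 h13.symm h23.symm h12
          y0 z x0 (by rw [← h']; exact hu) hy03 hz3 hz1 hx01 hx02
          (fun hh => hz2 (hh ▸ hy02)) hxy.symm (fun hh => hz2 (hh ▸ hx02))
  -- all pairwise intersections away from c2 lie inside c2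
  have hpair : ∀ e ∈ E.erase c2, ∀ f ∈ E.erase c2, e ≠ f → e ∩ f ⊆ c2 := by
    intro e he f hf hef u hu
    rw [Finset.mem_inter] at hu
    have heE : e ∈ E := Finset.mem_of_mem_erase he
    have hfE : f ∈ E := Finset.mem_of_mem_erase hf
    have hec2 : e ≠ c2 := Finset.ne_of_mem_erase he
    have hfc2 : f ≠ c2 := Finset.ne_of_mem_erase hf
    by_cases he1 : e = c1
    · subst he1
      by_cases hf3 : f = c3
      · subst hf3; exact Zc2 u hu.1 hu.2
      · rcases B1a f hfE (Ne.symm hef) hfc2 hf3 u hu.2 hu.1 with h' | h'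
        · exact h' ▸ hx02
        · exact h' ▸ hy02
    by_cases he3 : e = c3
    · subst he3
      by_cases hf1 : f = c1
      · subst hf1; exact Zc2 u hu.2 hu.1
      · rcases B1c f hfE hf1 hfc2 (Ne.symm hef) u hu.2 hu.1 with h' | h'
        · exact h' ▸ hx02
        · exact h' ▸ hy02
    by_cases hf1 : f = c1
    · subst hf1
      rcases B1a e heE he1 hec2 he3 u hu.1 hu.2 with h' | h'
      · exact h' ▸ hx02
      · exact h' ▸ hy02
    by_cases hf3 : f = c3
    · subst hf3
      rcases B1c e heE he1 hec2 he3 u hu.1 hu.2 with h' | h'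
      · exact h' ▸ hx02
      · exact h' ▸ hy02
    exact EE2 e f heE he1 hec2 he3 hfE hf1 hfc2 hf3 (Ne.symm hef) u hu.1 hu.2
  exact trace_count E hr hu hRC c2 hc2 hpair



theorem sunflower_count {n r : ℕ} (E : Finset (Finset (Fin n))) (hr : 4 ≤ r)
    (hu : Uniform E r) (hm : 2 ≤ E.card) (t : Fin n)
    (hsun : ∀ e ∈ E, ∀ f ∈ E, e ≠ f → e ∩ f = {t}) :
    E.card * (r - 1) + 1 ≤ (E.biUnion id).card := by
  classical
  have htall : ∀ e ∈ E, t ∈ e := by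
    intro e he
    obtain ⟨f, hf, hfe⟩ : ∃ f ∈ E, f ≠ e := by
      obtain ⟨u, hu', w, hw, huw⟩ := Finset.one_lt_card.mp (by omega : 1 < E.card)
      by_cases h : u = e
      · exact ⟨w, hw, fun hh => huw (h.trans hh.symm)⟩
      · exact ⟨u, hu', h⟩
    have := hsun e he f hf (Ne.symm hfe)
    have ht : t ∈ e ∩ f := by rw [this]; exact Finset.mem_singleton_self t
    exact (Finset.mem_inter.mp ht).1
  obtain ⟨e0, he0⟩ : E.Nonempty := Finset.card_pos.mp (by omega)
  have hsub : insert t (E.biUnion fun e => e.erase t) ⊆ E.biUnion id := by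
    intro u hu'
    rw [Finset.mem_insert] at hu'
    rcases hu' with rfl | hu'
    · exact Finset.mem_biUnion.mpr ⟨e0, he0, htall e0 he0⟩
    · obtain ⟨e, he, hue⟩ := Finset.mem_biUnion.mp hu'
      exact Finset.mem_biUnion.mpr ⟨e, he, Finset.mem_of_mem_erase hue⟩
  have hnot : t ∉ E.biUnion fun e => e.erase t := by
    intro hmem
    obtain ⟨e, he, hte⟩ := Finset.mem_biUnion.mp hmem
    exact Finset.notMem_erase t e hte
  have hdisj : ∀ e ∈ E, ∀ f ∈ E, e ≠ f → Disjoint (e.erase t) (f.erase t) := by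
    intro e he f hf hef
    rw [Finset.disjoint_left]
    intro x hx hx'
    have : x ∈ e ∩ f := Finset.mem_inter.mpr
      ⟨Finset.mem_of_mem_erase hx, Finset.mem_of_mem_erase hx'⟩
    rw [hsun e he f hf hef, Finset.mem_singleton] at this
    exact Finset.notMem_erase t e (this ▸ hx)
  have hcard : (insert t (E.biUnion fun e => e.erase t)).card =
      E.card * (r - 1) + 1 := by
    rw [Finset.card_insert_of_notMem hnot, Finset.card_biUnion hdisj]
    have : ∀ e ∈ E, (e.erase t).card = r - 1 := by
      intro e he
      rw [Finset.card_erase_of_mem (htall e he), hu e he]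
    rw [Finset.sum_congr rfl this, Finset.sum_const, smul_eq_mul]
  calc E.card * (r - 1) + 1 = (insert t (E.biUnion fun e => e.erase t)).card := hcard.symm
    _ ≤ (E.biUnion id).card := Finset.card_le_card hsub

theorem main_count {n r : ℕ} (E : Finset (Finset (Fin n))) (hr : 4 ≤ r)
    (hu : Uniform E r) (hRC : NoRC E)
    (hconn : ∀ e ∈ E, ∀ f ∈ E, Relation.ReflTransGen (Adj E) e f)
    (hm : 4 ≤ E.card) :
    E.card * r + 8 ≤ (E.biUnion id).card + 2 * E.card + 2 * r := by
  classical
  by_cases hA : ∀ e ∈ E, ∀ f ∈ E, ∀ g ∈ E, e ≠ f → f ≠ g → e ≠ g →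
      ∀ x ∈ e ∩ f, ∀ y ∈ f ∩ g, x = y
  · obtain ⟨t, ht⟩ := sunflower E hconn (by omega) hA
    have hcount := sunflower_count E hr hu (by omega) t ht
    have hmul : E.card * (r - 1) + E.card = E.card * r := by
      have h1 : E.card * (r - 1) + E.card = E.card * (r - 1 + 1) := by ring
      have h2 : r - 1 + 1 = r := by omega
      rw [h1, h2]
    omega
  · push_neg at hA
    obtain ⟨c1, hc1, c2, hc2, c3, hc3, h12, h23, h13, x0, hx0, y0, hy0, hxy⟩ := hA
    rw [Finset.mem_inter] at hx0 hy0
    exact caseB E hr hu hRC hconn hm c1 c2 c3 hc1 hc2 hc3 h12 h13 h23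
      x0 y0 hx0.1 hx0.2 hy0.1 hy0.2 hxy


theorem stmt4 (r n : ℕ) (hr : 4 ≤ r) (hn : r + 5 ≤ n)
    (E : Finset (Finset (Fin n))) (hu : Uniform E r) (hc : Connected E)
    (hf : BPFree E 4) :
    (E.card : ℚ) ≤ max (((n : ℚ) - 5) / ((r : ℚ) - 1) + 3)
      (((n : ℚ) - 4) / ((r : ℚ) - 2) + 2) := by
  have hr2 : (0 : ℚ) < (r : ℚ) - 2 := by
    have : (4 : ℚ) ≤ (r : ℚ) := by exact_mod_cast hr
    linarith
  have hnr : (r : ℚ) + 5 ≤ (n : ℚ) := by exact_mod_cast hn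
  have key : (E.card : ℚ) ≤ ((n : ℚ) - 4) / ((r : ℚ) - 2) + 2 := by
    by_cases hm : E.card ≤ 3
    · have h1 : (E.card : ℚ) ≤ 3 := by exact_mod_cast hm
      have h2 : (1 : ℚ) ≤ ((n : ℚ) - 4) / ((r : ℚ) - 2) := by
        rw [le_div_iff₀ hr2]
        linarith
      linarith
    · push_neg at hm
      have hm4 : 4 ≤ E.card := hm
      have hRC := noRC_of_BPFree E hr hu hf
      have hconn := chain_conn E hr hu hc
      have hcount := main_count E hr hu hRC hconn hm4
      have hUn : (E.biUnion id).card ≤ n := by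
        calc (E.biUnion id).card ≤ (Finset.univ : Finset (Fin n)).card :=
            Finset.card_le_card (Finset.subset_univ _)
          _ = n := by simp
      have hnat : E.card * r + 8 ≤ n + 2 * E.card + 2 * r := by omega
      have hq : (E.card : ℚ) * (r : ℚ) + 8 ≤ (n : ℚ) + 2 * (E.card : ℚ) + 2 * (r : ℚ) := by
        exact_mod_cast hnat
      have h3 : ((E.card : ℚ) - 2) * ((r : ℚ) - 2) ≤ (n : ℚ) - 4 := by nlinarith [hq]
      have h4 : (E.card : ℚ) - 2 ≤ ((n : ℚ) - 4) / ((r : ℚ) - 2) := by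
        rw [le_div_iff₀ hr2]
        linarith [h3]
      linarith
  exact le_trans key (le_max_right _ _)


end Berge
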